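/- Let A be a symmetric d-tensor A = (a_{i₁…i_d}) on [n]^d, q ≥ 2, and let e_q(A) be the qd-tensor with (e_q(A))_{i₁…i_{qd}} = a_{i₁ i_{q+1} … i_{(d−1)q+1}} if within each consecutive block of q indices all indices coincide, and 0 otherwise. Then the injective norm sup{ |⟨e_q(A), x¹ ⊗ ⋯ ⊗ x^{qd}⟩| : ‖x^j‖₂ ≤ 1 for all j } equals max_{i₁,…,i_d} |a_{i₁…i_d}|. -/
import Mathlib

open Finset

lemma reindex_key (n d q : ℕ) (hq : 0 < q) (A : (Fin d → Fin n) → ℝ)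
    (x : Fin d × Fin q → Fin n → ℝ) :
    ∑ m : Fin d × Fin q → Fin n,
        (if ∀ p : Fin d × Fin q, m p = m (p.1, ⟨0, hq⟩)
          then A (fun k => m (k, ⟨0, hq⟩)) else 0) * ∏ p, x p (m p)
      = ∑ i : Fin d → Fin n, A i * ∏ p : Fin d × Fin q, x p (i p.1) := by
  classical
  simp only [ite_mul, zero_mul]
  rw [← Finset.sum_filter]
  refine Finset.sum_nbij' (fun m => fun k => m (k, ⟨0, hq⟩)) (fun i => fun p => i p.1)
    ?_ ?_ ?_ ?_ ?_
  · intro m _; exact Finset.mem_univ _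
  · intro i _
    simp
  · intro m hm
    simp only [Finset.mem_filter, Finset.mem_univ, true_and] at hm
    funext p
    exact (hm p).symm
  · intro i _; rfl
  · intro m hm
    simp only [Finset.mem_filter, Finset.mem_univ, true_and] at hm
    congr 1
    exact Finset.prod_congr rfl (fun p _ => by rw [hm p])

lemma abs_le_one_of_sqrt (n : ℕ) (f : Fin n → ℝ) (h : Real.sqrt (∑ r, f r ^ 2) ≤ 1)
    (r : Fin n) : |f r| ≤ 1 := by
  have hs : (0:ℝ) ≤ ∑ r, f r ^ 2 := Finset.sum_nonneg fun _ _ => sq_nonneg _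
  have hsum : (∑ r, f r ^ 2) ≤ 1 := by
    nlinarith [Real.sq_sqrt hs, Real.sqrt_nonneg (∑ r, f r ^ 2)]
  have : f r ^ 2 ≤ 1 :=
    le_trans (Finset.single_le_sum (fun i _ => sq_nonneg (f i)) (Finset.mem_univ r)) hsum
  nlinarith [sq_abs (f r), abs_nonneg (f r)]

lemma sum_prod_abs_le_one (n q : ℕ) (hq : 2 ≤ q) (y : Fin q → Fin n → ℝ)
    (hy : ∀ j, Real.sqrt (∑ r, y j r ^ 2) ≤ 1) :
    ∑ r : Fin n, ∏ j : Fin q, |y j r| ≤ 1 := by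
  set j0 : Fin q := ⟨0, by omega⟩
  set j1 : Fin q := ⟨1, by omega⟩
  have hne : j0 ≠ j1 := by simp [j0, j1, Fin.ext_iff]
  have step1 : ∀ r : Fin n, ∏ j : Fin q, |y j r| ≤ |y j0 r| * |y j1 r| := by
    intro r
    rw [← Finset.prod_sdiff (Finset.subset_univ ({j0, j1} : Finset (Fin q)))]
    calc (∏ j ∈ Finset.univ \ {j0, j1}, |y j r|) * ∏ j ∈ ({j0, j1} : Finset (Fin q)), |y j r|
        ≤ 1 * ∏ j ∈ ({j0, j1} : Finset (Fin q)), |y j r| := by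
          apply mul_le_mul_of_nonneg_right
          · exact Finset.prod_le_one (fun i _ => abs_nonneg _)
              (fun i _ => abs_le_one_of_sqrt n (y i) (hy i) r)
          · exact Finset.prod_nonneg fun i _ => abs_nonneg _
      _ = |y j0 r| * |y j1 r| := by rw [one_mul, Finset.prod_pair hne]
  calc ∑ r : Fin n, ∏ j : Fin q, |y j r| ≤ ∑ r : Fin n, |y j0 r| * |y j1 r| :=
        Finset.sum_le_sum fun r _ => step1 r
    _ ≤ Real.sqrt (∑ r, |y j0 r| ^ 2) * Real.sqrt (∑ r, |y j1 r| ^ 2) :=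
        Real.sum_mul_le_sqrt_mul_sqrt _ _ _
    _ ≤ 1 * 1 := by
        simp only [sq_abs]
        exact mul_le_mul (hy j0) (hy j1) (Real.sqrt_nonneg _) zero_le_one
    _ = 1 := one_mul 1

theorem stmt_18 (n d q : ℕ) (hq : 2 ≤ q) (A : (Fin d → Fin n) → ℝ)
    (hsymm : ∀ (σ : Equiv.Perm (Fin d)) (i : Fin d → Fin n), A (i ∘ σ) = A i) :
    sSup {c : ℝ | ∃ x : Fin d × Fin q → Fin n → ℝ,
        (∀ p, Real.sqrt (∑ r, x p r ^ 2) ≤ 1) ∧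
        c = |∑ m : Fin d × Fin q → Fin n,
              (if ∀ p : Fin d × Fin q, m p = m (p.1, ⟨0, by omega⟩)
                then A (fun k => m (k, ⟨0, by omega⟩)) else 0) * ∏ p, x p (m p)|}
      = ⨆ i : Fin d → Fin n, |A i| := by
  classical
  have hq0 : 0 < q := by omega
  set S : Set ℝ := {c : ℝ | ∃ x : Fin d × Fin q → Fin n → ℝ,
        (∀ p, Real.sqrt (∑ r, x p r ^ 2) ≤ 1) ∧
        c = |∑ m : Fin d × Fin q → Fin n,
              (if ∀ p : Fin d × Fin q, m p = m (p.1, ⟨0, by omega⟩)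
                then A (fun k => m (k, ⟨0, by omega⟩)) else 0) * ∏ p, x p (m p)|} with hS
  by_cases hne : Nonempty (Fin d → Fin n)
  · -- main case
    obtain ⟨i0, hi0⟩ := Finite.exists_max (fun i : Fin d → Fin n => |A i|)
    set M : ℝ := |A i0| with hM
    have hM0 : 0 ≤ M := abs_nonneg _
    have hsup : (⨆ i : Fin d → Fin n, |A i|) = M := by
      apply le_antisymm
      · exact ciSup_le fun i => hi0 i
      · exact le_ciSup (Finite.bddAbove_range fun i => |A i|) i0
    -- upper bound for elements of S
    have hub : ∀ c ∈ S, c ≤ M := by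
      rintro c ⟨x, hx, rfl⟩
      rw [reindex_key n d q hq0 A x]
      calc |∑ i : Fin d → Fin n, A i * ∏ p : Fin d × Fin q, x p (i p.1)|
          ≤ ∑ i : Fin d → Fin n, |A i * ∏ p : Fin d × Fin q, x p (i p.1)| :=
            Finset.abs_sum_le_sum_abs _ _
        _ = ∑ i : Fin d → Fin n, |A i| * ∏ p : Fin d × Fin q, |x p (i p.1)| := by
            simp [abs_mul, Finset.abs_prod]
        _ ≤ ∑ i : Fin d → Fin n, M * ∏ p : Fin d × Fin q, |x p (i p.1)| := by
            refine Finset.sum_le_sum fun i _ => mul_le_mul_of_nonneg_right (hi0 i)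
              (Finset.prod_nonneg fun _ _ => abs_nonneg _)
        _ = M * ∑ i : Fin d → Fin n, ∏ p : Fin d × Fin q, |x p (i p.1)| := by
            rw [Finset.mul_sum]
        _ ≤ M * 1 := by
            apply mul_le_mul_of_nonneg_left _ hM0
            have hrw : ∀ i : Fin d → Fin n, (∏ p : Fin d × Fin q, |x p (i p.1)|)
                = ∏ k : Fin d, ∏ j : Fin q, |x (k, j) (i k)| := fun i => by
              rw [Fintype.prod_prod_type]
            calc ∑ i : Fin d → Fin n, ∏ p : Fin d × Fin q, |x p (i p.1)|
                = ∑ i : Fin d → Fin n, ∏ k : Fin d, ∏ j : Fin q, |x (k, j) (i k)| := by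
                  exact Finset.sum_congr rfl fun i _ => hrw i
              _ = ∏ k : Fin d, ∑ r : Fin n, ∏ j : Fin q, |x (k, j) r| := by
                  rw [Finset.prod_univ_sum, Fintype.piFinset_univ]
              _ ≤ ∏ k : Fin d, (1:ℝ) := by
                  refine Finset.prod_le_prod ?_ ?_
                  · intro k _
                    exact Finset.sum_nonneg fun r _ =>
                      Finset.prod_nonneg fun j _ => abs_nonneg _
                  · intro k _
                    exact sum_prod_abs_le_one n q hq (fun j => x (k, j)) (fun j => hx (k, j))
              _ = 1 := Finset.prod_const_one
        _ = M := mul_one M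
    -- M ∈ S
    have hmem : M ∈ S := by
      refine ⟨fun p r => if r = i0 p.1 then 1 else 0, ?_, ?_⟩
      · intro p
        have : (∑ r : Fin n, (if r = i0 p.1 then (1:ℝ) else 0) ^ 2) = 1 := by
          simp only [ite_pow, one_pow, zero_pow (two_ne_zero), Finset.sum_ite_eq',
            Finset.mem_univ, if_true]
        rw [this, Real.sqrt_one]
      · rw [reindex_key n d q hq0 A (fun p r => if r = i0 p.1 then 1 else 0)]
        have : (∑ i : Fin d → Fin n,
            A i * ∏ p : Fin d × Fin q, (if i p.1 = i0 p.1 then (1:ℝ) else 0)) = A i0 := by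
          rw [Finset.sum_eq_single i0]
          · simp
          · intro i _ hne'
            have : ∃ k, i k ≠ i0 k := by
              by_contra h
              push_neg at h
              exact hne' (funext h)
            obtain ⟨k, hk⟩ := this
            rw [Finset.prod_eq_zero (Finset.mem_univ ((k, ⟨0, hq0⟩) : Fin d × Fin q))
              (by simp [hk]), mul_zero]
          · intro h; exact absurd (Finset.mem_univ i0) h
        rw [this]
    rw [hsup]
    apply le_antisymm
    · exact csSup_le ⟨M, hmem⟩ hub
    · exact le_csSup ⟨M, hub⟩ hmem
  · -- empty case : no i, so n = 0 and d > 0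
    have hempty : IsEmpty (Fin d → Fin n) := not_nonempty_iff.mp hne
    have hd : 0 < d := by
      by_contra h
      exact hne ⟨fun k => absurd k.2 (by omega)⟩
    have hn : n = 0 := by
      by_contra h
      exact hne ⟨fun _ => ⟨0, by omega⟩⟩
    have hm_empty : IsEmpty (Fin d × Fin q → Fin n) := by
      subst hn
      exact ⟨fun m => (m (⟨0, hd⟩, ⟨0, hq0⟩)).elim0⟩
    have hSeq : S = {0} := by
      apply Set.eq_singleton_iff_unique_mem.mpr
      constructor
      · refine ⟨fun _ _ => 0, ?_, ?_⟩
        · intro p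
          subst hn
          simp
        · rw [Finset.sum_of_isEmpty, abs_zero]
      · rintro c ⟨x, _, rfl⟩
        rw [Finset.sum_of_isEmpty, abs_zero]
    rw [hSeq, csSup_singleton, Real.iSup_of_isEmpty]
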